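/- (Contraction of constraint slack.) Let g be C¹ on an open set containing the compact box I ⊂ ℝ^{n_u}, let κ_i > 0, γ ∈ [0,1), and let κ̃_i ≥ 0 satisfy |∂g/∂u_i(u)| ≤ κ̃_i for all u ∈ I together with κ̃_i ≤ γκ_i for every i. If u, v ∈ I satisfy Σ_{i=1}^{n_u} κ_i|v_i − u_i| ≤ −g(u), then g(v) ≤ (1 − γ) g(u). -/

import Mathlib

/-- Contraction of constraint slack: if `|∂g/∂u_i| ≤ κ̃ i ≤ γ κ i` on
the box `I = Icc uL uU` with `γ ∈ [0,1)`, and `u, v ∈ I` satisfy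
`Σ_i κ i |v i - u i| ≤ -g u`, then `g v ≤ (1 - γ) * g u`. -/
theorem slack_contraction
    {n : ℕ} (uL uU : Fin n → ℝ)
    (g : (Fin n → ℝ) → ℝ)
    (U : Set (Fin n → ℝ)) (hUopen : IsOpen U) (hIU : Set.Icc uL uU ⊆ U)
    (hg : ContDiffOn ℝ 1 g U)
    (κ : Fin n → ℝ) (hκpos : ∀ i, 0 < κ i)
    (γ : ℝ) (hγ : γ ∈ Set.Ico (0 : ℝ) 1)
    (κt : Fin n → ℝ) (hκtnonneg : ∀ i, 0 ≤ κt i)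
    (hκt : ∀ u ∈ Set.Icc uL uU, ∀ i, |fderiv ℝ g u (Pi.single i 1)| ≤ κt i)
    (hκtγ : ∀ i, κt i ≤ γ * κ i)
    (u v : Fin n → ℝ) (hu : u ∈ Set.Icc uL uU) (hv : v ∈ Set.Icc uL uU)
    (hstep : ∑ i, κ i * |v i - u i| ≤ -g u) :
    g v ≤ (1 - γ) * g u := by
  obtain ⟨hγ0, hγ1⟩ := hγ
  set M : ℝ := ∑ i, κt i * |v i - u i| with hM
  have hconv : Convex ℝ (Set.Icc uL uU) := convex_Icc _ _
  set p : ℝ → (Fin n → ℝ) := fun t => u + t • (v - u) with hp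
  have hpmem : ∀ t ∈ Set.Icc (0:ℝ) 1, p t ∈ Set.Icc uL uU := by
    intro t ht
    have h1 : (1 - t) • u + t • v ∈ Set.Icc uL uU :=
      hconv hu hv (by linarith [ht.1, ht.2]) ht.1 (by ring)
    have : p t = (1 - t) • u + t • v := by
      simp only [hp]
      module
    rw [this]; exact h1
  have hdiff : DifferentiableOn ℝ g U := hg.differentiableOn one_ne_zero
  have hder : ∀ t ∈ Set.Icc (0:ℝ) 1,
      HasDerivAt (fun t => g (p t)) (fderiv ℝ g (p t) (v - u)) t := by
    intro t ht
    have hgd : DifferentiableAt ℝ g (p t) :=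
      hdiff.differentiableAt (hUopen.mem_nhds (hIU (hpmem t ht)))
    have hpd : HasDerivAt p (v - u) t := by
      have h := ((hasDerivAt_id t).smul_const (v - u)).const_add u
      rw [one_smul] at h
      exact h
    exact hgd.hasFDerivAt.comp_hasDerivAt t hpd
  have hbound : ∀ t ∈ Set.Ico (0:ℝ) 1, ‖fderiv ℝ g (p t) (v - u)‖ ≤ M := by
    intro t ht
    have hw := hpmem t (Set.mem_Icc_of_Ico ht)
    have hrep : (v - u) = ∑ i, (v i - u i) • (Pi.single i (1:ℝ) : Fin n → ℝ) := by
      funext j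
      simp [Finset.sum_apply, Pi.single_apply]
    calc ‖fderiv ℝ g (p t) (v - u)‖
        = |∑ i, (v i - u i) * fderiv ℝ g (p t) (Pi.single i 1)| := by
          rw [hrep, map_sum]
          simp [Real.norm_eq_abs]
      _ ≤ ∑ i, |v i - u i| * |fderiv ℝ g (p t) (Pi.single i 1)| := by
          refine (Finset.abs_sum_le_sum_abs _ _).trans ?_
          simp [abs_mul]
      _ ≤ M := by
          refine Finset.sum_le_sum fun i _ => ?_
          rw [mul_comm]
          exact mul_le_mul_of_nonneg_right (hκt _ hw i) (abs_nonneg _)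
  have key : ‖g (p 1) - g (p 0)‖ ≤ M :=
    norm_image_sub_le_of_norm_deriv_le_segment_01'
      (fun t ht => (hder t ht).hasDerivWithinAt) hbound
  have hp1 : p 1 = v := by simp [hp]
  have hp0 : p 0 = u := by simp [hp]
  rw [hp1, hp0, Real.norm_eq_abs] at key
  have key' : g v - g u ≤ M := (le_abs_self _).trans key
  have hMγ : M ≤ γ * ∑ i, κ i * |v i - u i| := by
    rw [Finset.mul_sum]
    refine Finset.sum_le_sum fun i _ => ?_
    rw [← mul_assoc]
    exact mul_le_mul_of_nonneg_right (hκtγ i) (abs_nonneg _)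
  have hfin : γ * ∑ i, κ i * |v i - u i| ≤ γ * (-g u) :=
    mul_le_mul_of_nonneg_left hstep hγ0
  nlinarith
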